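/- Let D be a symmetric (J+1)×(J+1) real matrix. Any solution of the semi-discrete KGS ODE system U' = 2V, V' = (1/2)(DU - U + P² + Q²), P' = (1/2)DQ + U·Q, Q' = -(1/2)DP - U·P conserves the discrete energy H(U,V,P,Q) = (1/4)(-PᵀDP - QᵀDQ - UᵀDU + UᵀU + 4VᵀV - 2Σ_j u_j(p_j² + q_j²)): dH/dt = 0 along solutions. -/

import Mathlib

theorem kgs_semidiscrete_energy_conservation {J : ℕ}
    (D : Matrix (Fin (J + 1)) (Fin (J + 1)) ℝ) (hD : D.transpose = D)
    (U V P Q : ℝ → Fin (J + 1) → ℝ)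
    (hU : ∀ t, HasDerivAt U (fun i => 2 * V t i) t)
    (hV : ∀ t, HasDerivAt V (fun i =>
      (1 / 2) * (D.mulVec (U t) i - U t i + P t i ^ 2 + Q t i ^ 2)) t)
    (hP : ∀ t, HasDerivAt P (fun i =>
      (1 / 2) * D.mulVec (Q t) i + U t i * Q t i) t)
    (hQ : ∀ t, HasDerivAt Q (fun i =>
      -(1 / 2) * D.mulVec (P t) i - U t i * P t i) t) :
    ∀ t : ℝ, HasDerivAt (fun s => (1 / 4) *
      (-(∑ i, P s i * D.mulVec (P s) i) - (∑ i, Q s i * D.mulVec (Q s) i)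
        - (∑ i, U s i * D.mulVec (U s) i) + (∑ i, U s i * U s i)
        + 4 * (∑ i, V s i * V s i)
        - 2 * ∑ i, U s i * (P s i ^ 2 + Q s i ^ 2))) 0 t := by
  intro t
  have hDij : ∀ i j, D i j = D j i := fun i j => by
    conv_lhs => rw [← hD]
    exact Matrix.transpose_apply D i j
  -- derivative vectors
  set du : Fin (J + 1) → ℝ := fun i => 2 * V t i with hdu
  set dv : Fin (J + 1) → ℝ := fun i =>
    (1 / 2) * (D.mulVec (U t) i - U t i + P t i ^ 2 + Q t i ^ 2) with hdv
  set dp : Fin (J + 1) → ℝ := fun i =>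
    (1 / 2) * D.mulVec (Q t) i + U t i * Q t i with hdp
  set dq : Fin (J + 1) → ℝ := fun i =>
    -(1 / 2) * D.mulVec (P t) i - U t i * P t i with hdq
  have hU' : ∀ i, HasDerivAt (fun s => U s i) (du i) t := hasDerivAt_pi.mp (hU t)
  have hV' : ∀ i, HasDerivAt (fun s => V s i) (dv i) t := hasDerivAt_pi.mp (hV t)
  have hP' : ∀ i, HasDerivAt (fun s => P s i) (dp i) t := hasDerivAt_pi.mp (hP t)
  have hQ' : ∀ i, HasDerivAt (fun s => Q s i) (dq i) t := hasDerivAt_pi.mp (hQ t)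
  have hmv : ∀ (W : ℝ → Fin (J + 1) → ℝ) (W' : Fin (J + 1) → ℝ),
      (∀ i, HasDerivAt (fun s => W s i) (W' i) t) →
      ∀ i, HasDerivAt (fun s => D.mulVec (W s) i) (D.mulVec W' i) t := by
    intro W W' h i
    simp only [Matrix.mulVec, dotProduct]
    exact HasDerivAt.fun_sum fun j _ => (h j).const_mul (D i j)
  have hmvU := hmv U du hU'
  have hmvP := hmv P dp hP'
  have hmvQ := hmv Q dq hQ'
  -- symmetry swap
  have swap : ∀ a b : Fin (J + 1) → ℝ,
      (∑ i, a i * D.mulVec b i) = ∑ i, b i * D.mulVec a i := by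
    intro a b
    simp only [Matrix.mulVec, dotProduct, Finset.mul_sum]
    rw [Finset.sum_comm]
    exact Finset.sum_congr rfl fun i _ => Finset.sum_congr rfl fun j _ => by
      rw [hDij j i]; ring
  -- helper to restate quadratic-form derivatives
  have quad : ∀ (W : ℝ → Fin (J + 1) → ℝ) (W' : Fin (J + 1) → ℝ),
      (∀ i, HasDerivAt (fun s => W s i) (W' i) t) →
      HasDerivAt (fun s => ∑ i, W s i * D.mulVec (W s) i)
        (∑ i, 2 * (W' i * D.mulVec (W t) i)) t := by
    intro W W' h
    have h1 : HasDerivAt (fun s => ∑ i, W s i * D.mulVec (W s) i)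
        (∑ i, (W' i * D.mulVec (W t) i + W t i * D.mulVec W' i)) t :=
      HasDerivAt.fun_sum fun i _ => (h i).mul (hmv W W' h i)
    have h2 : (∑ i, (W' i * D.mulVec (W t) i + W t i * D.mulVec W' i))
        = ∑ i, 2 * (W' i * D.mulVec (W t) i) := by
      rw [Finset.sum_add_distrib, swap (W t) W', ← Finset.sum_add_distrib]
      exact Finset.sum_congr rfl fun i _ => by ring
    exact h2 ▸ h1
  have s1 := quad P dp hP'
  have s2 := quad Q dq hQ'
  have s3 := quad U du hU'
  have s4 : HasDerivAt (fun s => ∑ i, U s i * U s i)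
      (∑ i, (du i * U t i + U t i * du i)) t :=
    HasDerivAt.fun_sum fun i _ => (hU' i).mul (hU' i)
  have s5 : HasDerivAt (fun s => ∑ i, V s i * V s i)
      (∑ i, (dv i * V t i + V t i * dv i)) t :=
    HasDerivAt.fun_sum fun i _ => (hV' i).mul (hV' i)
  have s6 : HasDerivAt (fun s => ∑ i, U s i * (P s i ^ 2 + Q s i ^ 2))
      (∑ i, (du i * (P t i ^ 2 + Q t i ^ 2)
        + U t i * ((2 : ℕ) * P t i ^ (2 - 1) * dp i + (2 : ℕ) * Q t i ^ (2 - 1) * dq i))) t :=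
    HasDerivAt.fun_sum fun i _ =>
      (hU' i).mul (((hP' i).pow 2).add ((hQ' i).pow 2))
  have big := (((((s1.neg.sub s2).sub s3).add s4).add (s5.const_mul 4)).sub
      (s6.const_mul 2)).const_mul (1 / 4 : ℝ)
  have hE : (1 / 4 : ℝ) * (-(∑ i, 2 * (dp i * D.mulVec (P t) i))
      - (∑ i, 2 * (dq i * D.mulVec (Q t) i))
      - (∑ i, 2 * (du i * D.mulVec (U t) i))
      + (∑ i, (du i * U t i + U t i * du i))
      + 4 * (∑ i, (dv i * V t i + V t i * dv i))
      - 2 * ∑ i, (du i * (P t i ^ 2 + Q t i ^ 2)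
        + U t i * ((2 : ℕ) * P t i ^ (2 - 1) * dp i + (2 : ℕ) * Q t i ^ (2 - 1) * dq i)))
      = 0 := by
    rw [Finset.mul_sum, Finset.mul_sum]
    rw [← Finset.sum_neg_distrib, ← Finset.sum_sub_distrib, ← Finset.sum_sub_distrib,
      ← Finset.sum_add_distrib, ← Finset.sum_add_distrib, ← Finset.sum_sub_distrib]
    rw [Finset.sum_eq_zero, mul_zero]
    intro i _
    simp only [hdu, hdv, hdp, hdq]
    push_cast
    ring
  exact hE ▸ big
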